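/- Let k be a field of characteristic zero, C a coassociative, counital, cocommutative coalgebra over k, and L a Lie algebra over k; equip Hom_k(C, L) with the convolution bracket. If L is nilpotent of nilpotency class at most n (i.e. F^{n+1} L = 0, where F denotes the lower central series), then the Lie algebra Hom_k(C, L) is nilpotent of nilpotency class at most n (i.e. F^{n+1} Hom_k(C, L) = 0). -/

import Mathlib

/-!
STATEMENT 3: With the convolution bracket on `Hom_k(C, L)`: if `L` is nilpotent of class `≤ n`
(`F^(n+1) L = 0`) then so is the convolution Lie algebra `Hom_k(C, L)`
(`F^(n+1) Hom_k(C, L) = 0`).  Here `lcsF k b m` denotes `F^(m+1)` for the bracket `b`.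
-/

open TensorProduct

/-- The Lie bracket of `L`, as a linear map `L ⊗ L → L`. -/
noncomputable def lieBeta (k L : Type*) [Field k] [LieRing L] [LieAlgebra k L] :
    L ⊗[k] L →ₗ[k] L :=
  TensorProduct.lift
    (LinearMap.mk₂ k (fun x y => ⁅x, y⁆) add_lie smul_lie lie_add lie_smul)

/-- The convolution bracket `β ∘ (f ⊗ g) ∘ Δ` on `Hom_k(C, L)`. -/
noncomputable def convBr {k C L : Type*} [Field k]
    [AddCommGroup C] [Module k C] [Coalgebra k C] [LieRing L] [LieAlgebra k L]
    (f g : C →ₗ[k] L) : C →ₗ[k] L :=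
  lieBeta k L ∘ₗ TensorProduct.map f g ∘ₗ Coalgebra.comul

/-- The lower central series of a bracket `b` on a `k`-module `M`:
`lcsF k b 0 = F¹ M = M` and `lcsF k b (n+1) = F^(n+2) M = [M, F^(n+1) M]`. -/
def lcsF (k : Type*) {M : Type*} [Field k] [AddCommGroup M] [Module k M]
    (b : M → M → M) : ℕ → Submodule k M
  | 0 => ⊤
  | n + 1 => Submodule.span k {m | ∃ x y, y ∈ lcsF k b n ∧ m = b x y}

lemma lcsF_conv_le {k C L : Type*} [Field k]
    [AddCommGroup C] [Module k C] [Coalgebra k C] [LieRing L] [LieAlgebra k L]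
    (m : ℕ) (f : C →ₗ[k] L)
    (hf : f ∈ lcsF k (fun f g : C →ₗ[k] L => convBr f g) m) (c : C) :
    f c ∈ lcsF k (fun x y : L => ⁅x, y⁆) m := by
  induction m generalizing f c with
  | zero => exact Submodule.mem_top
  | succ m ih =>
    have h : lcsF k (fun f g : C →ₗ[k] L => convBr f g) (m + 1) ≤
        Submodule.comap (LinearMap.applyₗ c)
          (lcsF k (fun x y : L => ⁅x, y⁆) (m + 1)) := by
      rw [lcsF, Submodule.span_le]
      rintro _ ⟨x, y, hy, rfl⟩
      simp only [SetLike.mem_coe, Submodule.mem_comap]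
      have key : (⊤ : Submodule k (C ⊗[k] C)) ≤
          Submodule.comap (lieBeta k L ∘ₗ TensorProduct.map x y)
            (lcsF k (fun x y : L => ⁅x, y⁆) (m + 1)) := by
        rw [← TensorProduct.span_tmul_eq_top, Submodule.span_le]
        rintro _ ⟨a, b, rfl⟩
        simp only [SetLike.mem_coe, Submodule.mem_comap, LinearMap.coe_comp,
          Function.comp_apply, TensorProduct.map_tmul]
        have : lieBeta k L (x a ⊗ₜ[k] y b) = ⁅x a, y b⁆ := by
          simp [lieBeta]
        rw [this, lcsF]
        exact Submodule.subset_span ⟨x a, y b, ih y hy b, rfl⟩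
      have := key Submodule.mem_top (x := (Coalgebra.comul : C →ₗ[k] C ⊗[k] C) c)
      simpa [convBr, LinearMap.applyₗ_apply_apply] using this
    exact h hf

theorem convolution_nilpotent_of_nilpotent
    (k C L : Type*) [Field k] [CharZero k]
    [AddCommGroup C] [Module k C] [Coalgebra k C]
    -- `C` is cocommutative:
    (hcc : (TensorProduct.comm k C C).toLinearMap ∘ₗ Coalgebra.comul =
      (Coalgebra.comul : C →ₗ[k] C ⊗[k] C))
    [LieRing L] [LieAlgebra k L]
    (n : ℕ)
    -- `L` is nilpotent of class at most `n`, i.e. `F^(n+1) L = 0`: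
    (hL : lcsF k (fun x y : L => ⁅x, y⁆) n = ⊥) :
    -- then `Hom_k(C, L)` is nilpotent of class at most `n`:
    lcsF k (fun f g : C →ₗ[k] L => convBr f g) n = ⊥ := by
  rw [eq_bot_iff]
  intro f hf
  have : ∀ c, f c = 0 := fun c => by
    have := lcsF_conv_le n f hf c
    rw [hL] at this
    simpa using this
  exact LinearMap.ext this
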